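/- If the Kronecker product U ⊗ V of a c×c matrix U and an r×r matrix V is diagonal with positive diagonal entries, and both U and V are symmetric positive definite, then U and V are both diagonal with positive diagonal entries. -/

import Mathlib

open Matrix
open scoped Kronecker

theorem kronecker_diagonal_factors (c r : ℕ) (hc : 1 ≤ c) (hr : 1 ≤ r)
    (U : Matrix (Fin c) (Fin c) ℝ) (V : Matrix (Fin r) (Fin r) ℝ)
    (hU : U.PosDef) (hV : V.PosDef)
    (hdiag : (U ⊗ₖ V).IsDiag) (hpos : ∀ p, 0 < (U ⊗ₖ V) p p) :
    U.IsDiag ∧ (∀ i, 0 < U i i) ∧ V.IsDiag ∧ (∀ j, 0 < V j j) := by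
  have hUd : ∀ i, 0 < U i i := by
    intro i
    have := hU.dotProduct_mulVec_pos (x := Pi.single i 1) (fun h => one_ne_zero (α := ℝ) (by simpa using congrFun h i))
    simpa [dotProduct, mulVec, Pi.single_apply] using this
  have hVd : ∀ j, 0 < V j j := by
    intro j
    have := hV.dotProduct_mulVec_pos (x := Pi.single j 1) (fun h => one_ne_zero (α := ℝ) (by simpa using congrFun h j))
    simpa [dotProduct, mulVec, Pi.single_apply] using this
  obtain ⟨i0⟩ : Nonempty (Fin c) := ⟨⟨0, hc⟩⟩
  obtain ⟨j0⟩ : Nonempty (Fin r) := ⟨⟨0, hr⟩⟩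
  refine ⟨?_, hUd, ?_, hVd⟩
  · intro i i' h
    have := hdiag (i := (i, j0)) (j := (i', j0)) (by simp [h])
    simp only [kroneckerMap_apply] at this
    exact (mul_eq_zero.1 this).resolve_right (hVd j0).ne'
  · intro j j' h
    have := hdiag (i := (i0, j)) (j := (i0, j')) (by simp [h])
    simp only [kroneckerMap_apply] at this
    exact (mul_eq_zero.1 this).resolve_left (hUd i0).ne'
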